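/- Let Ψ be the set of all tuples A = (a_0,…,a_n) of vectors a_j ∈ Q such that Re Σ_{j,k=0}^{n} ⟨a_j,a_k⟩ t_j t_k > 0 for all t_0,…,t_n ≥ 0 with at least one t_j strictly positive. Then Ψ is a relatively open subset of Q^{n+1}, the integral defining F(A) converges absolutely for every A ∈ Ψ, and the function F is holomorphic on Ψ. -/

import Mathlib

open MeasureTheory
open scoped BigOperators

noncomputable section

/-- The standard complex bilinear form `⟨z,w⟩ = z₀w₀ + ⋯ + zₙwₙ` on `ℂ^{n+1}`. -/
def cbil {n : ℕ} (z w : Fin (n + 1) → ℂ) : ℂ := ∑ i, z i * w i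

/-- `F(A) = det A ⬝ ∫_{t₀,…,tₙ ≥ 0} exp(−Σ_{j,k} ⟨a_j,a_k⟩ t_j t_k) dt`, where `A` is the
matrix with columns `a₀, …, aₙ`. -/
def Fdet {n : ℕ} (A : Fin (n + 1) → (Fin (n + 1) → ℂ)) : ℂ :=
  (Matrix.of fun i j => A j i).det *
    ∫ t in {t : Fin (n + 1) → ℝ | ∀ i, 0 ≤ t i},
      Complex.exp (-∑ j, ∑ k, cbil (A j) (A k) * (t j * t k))

/-- The set `Ψ ⊆ Q^{n+1}` of tuples `(a₀,…,aₙ)` of points of the quadric `Q` such that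
`Re Σ_{j,k} ⟨a_j,a_k⟩ t_j t_k > 0` for all `t ≥ 0`, `t ≠ 0`. -/
def Psi (n : ℕ) : Set (Fin (n + 1) → (Fin (n + 1) → ℂ)) :=
  {A | (∀ j, cbil (A j) (A j) = 1) ∧
    ∀ t : Fin (n + 1) → ℝ, (∀ i, 0 ≤ t i) → t ≠ 0 →
      0 < (∑ j, ∑ k, cbil (A j) (A k) * (t j * t k)).re}

/-! ### Auxiliary definitions and lemmas -/

/-- The quadratic form `Q(A,t) = Σ_{j,k} ⟨a_j,a_k⟩ t_j t_k`. -/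
def Qf {n : ℕ} (A : Fin (n + 1) → (Fin (n + 1) → ℂ)) (t : Fin (n + 1) → ℝ) : ℂ :=
  ∑ j, ∑ k, cbil (A j) (A k) * (t j * t k)

theorem cbil_norm_le {n : ℕ} (u v : Fin (n + 1) → ℂ) :
    ‖cbil u v‖ ≤ (n + 1) * (‖u‖ * ‖v‖) := by
  refine (norm_sum_le _ _).trans ?_
  have h : ∀ i ∈ (Finset.univ : Finset (Fin (n+1))), ‖u i * v i‖ ≤ ‖u‖ * ‖v‖ := fun i _ => by
    rw [norm_mul]
    exact mul_le_mul (norm_le_pi_norm u i) (norm_le_pi_norm v i) (norm_nonneg _) (norm_nonneg _)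
  refine (Finset.sum_le_sum h).trans ?_
  simp [Finset.sum_const]

theorem cbil_sub_left {n : ℕ} (u u' v : Fin (n + 1) → ℂ) :
    cbil u v - cbil u' v = cbil (u - u') v := by
  simp [cbil, ← Finset.sum_sub_distrib, sub_mul]

theorem cbil_sub_right {n : ℕ} (u v v' : Fin (n + 1) → ℂ) :
    cbil u v - cbil u v' = cbil u (v - v') := by
  simp [cbil, ← Finset.sum_sub_distrib, mul_sub]

theorem Qf_smul {n : ℕ} (A : Fin (n + 1) → (Fin (n + 1) → ℂ)) (s : ℝ) (u : Fin (n + 1) → ℝ) :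
    Qf A (s • u) = (s:ℂ)^2 * Qf A u := by
  simp only [Qf, Finset.mul_sum]
  refine Finset.sum_congr rfl fun j _ => Finset.sum_congr rfl fun k _ => ?_
  simp only [Pi.smul_apply, smul_eq_mul, Complex.ofReal_mul]
  ring

theorem Qf_cont_t {n : ℕ} (A : Fin (n + 1) → (Fin (n + 1) → ℂ)) :
    Continuous fun t : Fin (n + 1) → ℝ => Qf A t := by
  unfold Qf
  fun_prop

theorem Qf_zero {n : ℕ} (A : Fin (n + 1) → (Fin (n + 1) → ℂ)) : Qf A 0 = 0 := by
  simp [Qf]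

theorem exists_pos_lower {n : ℕ} (A : Fin (n + 1) → (Fin (n + 1) → ℂ))
    (hA : ∀ t : Fin (n + 1) → ℝ, (∀ i, 0 ≤ t i) → t ≠ 0 → 0 < (Qf A t).re) :
    ∃ c > 0, ∀ t : Fin (n + 1) → ℝ, (∀ i, 0 ≤ t i) → c * ‖t‖^2 ≤ (Qf A t).re := by
  set K : Set (Fin (n+1) → ℝ) := {t | (∀ i, 0 ≤ t i) ∧ ‖t‖ = 1} with hK
  have hKc : IsCompact K := by
    have hsub : K ⊆ Metric.sphere 0 1 := fun t ht => by
      simp [Metric.mem_sphere, dist_eq_norm, ht.2]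
    refine (isCompact_sphere (0 : Fin (n+1) → ℝ) 1).of_isClosed_subset ?_ hsub
    have : K = (⋂ i, {t : Fin (n+1) → ℝ | 0 ≤ t i}) ∩ {t | ‖t‖ = 1} := by
      ext t; simp [hK, Set.mem_iInter]
    rw [this]
    exact IsClosed.inter (isClosed_iInter fun i =>
      isClosed_le continuous_const (continuous_apply i))
      (isClosed_eq continuous_norm continuous_const)
  have hKne : K.Nonempty := by
    refine ⟨fun _ => 1, fun i => zero_le_one, ?_⟩
    simp [pi_norm_const]
  obtain ⟨t₀, ht₀, hmin⟩ := hKc.exists_isMinOn hKne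
    ((Complex.continuous_re.comp (Qf_cont_t A)).continuousOn)
  have ht₀ne : t₀ ≠ 0 := fun h => by
    have := ht₀.2; rw [h, norm_zero] at this; exact one_ne_zero this.symm
  refine ⟨(Qf A t₀).re, hA t₀ ht₀.1 ht₀ne, fun t ht => ?_⟩
  rcases eq_or_ne t 0 with rfl | htne
  · simp [Qf_zero]
  · have hs : 0 < ‖t‖ := norm_pos_iff.mpr htne
    set u : Fin (n+1) → ℝ := ‖t‖⁻¹ • t with hu
    have huK : u ∈ K := by
      constructor
      · intro i
        exact mul_nonneg (inv_nonneg.mpr hs.le) (ht i)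
      · rw [hu, norm_smul, norm_inv, norm_norm, inv_mul_cancel₀ hs.ne']
    have htu : t = ‖t‖ • u := by
      rw [hu, smul_smul, mul_inv_cancel₀ hs.ne', one_smul]
    have hQt : (Qf A t).re = ‖t‖^2 * (Qf A u).re := by
      rw [htu, Qf_smul]
      have hc2 : ((‖t‖:ℂ))^2 = ((‖t‖^2 : ℝ) : ℂ) := by push_cast; ring
      rw [hc2, Complex.re_ofReal_mul, norm_smul, norm_norm, huK.2, mul_one]
    have hm : (Qf A t₀).re ≤ (Qf A u).re := hmin huK
    rw [hQt, mul_comm (‖t‖^2)]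
    exact mul_le_mul_of_nonneg_right hm (by positivity)

theorem Qf_sub_norm_le {n : ℕ} (A B : Fin (n + 1) → (Fin (n + 1) → ℂ)) (t : Fin (n + 1) → ℝ) :
    ‖Qf B t - Qf A t‖ ≤ (n+1)^3 * ((‖B‖ + ‖A‖) * (‖B - A‖ * ‖t‖^2)) := by
  have key : ∀ j k : Fin (n+1), ‖(cbil (B j) (B k) - cbil (A j) (A k)) * (↑(t j) * ↑(t k))‖
      ≤ (n+1) * ((‖B‖ + ‖A‖) * (‖B - A‖ * ‖t‖^2)) := by
    intro j k
    have h1 : cbil (B j) (B k) - cbil (A j) (A k)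
        = cbil (B j - A j) (B k) + cbil (A j) (B k - A k) := by
      rw [← cbil_sub_left, ← cbil_sub_right]; ring
    rw [h1, norm_mul]
    have hBA : ∀ l : Fin (n+1), ‖B l - A l‖ ≤ ‖B - A‖ := fun l => by
      simpa using norm_le_pi_norm (B - A) l
    have hB : ∀ l : Fin (n+1), ‖B l‖ ≤ ‖B‖ := fun l => norm_le_pi_norm B l
    have hA : ∀ l : Fin (n+1), ‖A l‖ ≤ ‖A‖ := fun l => norm_le_pi_norm A l
    have e1 := cbil_norm_le (B j - A j) (B k)
    have e2 := cbil_norm_le (A j) (B k - A k)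
    have hd : ‖cbil (B j - A j) (B k) + cbil (A j) (B k - A k)‖
        ≤ (n+1) * ((‖B‖ + ‖A‖) * ‖B - A‖) := by
      refine (norm_add_le _ _).trans ?_
      have n1 : (0:ℝ) ≤ (n:ℝ)+1 := by positivity
      have m1 : ‖B j - A j‖ * ‖B k‖ ≤ ‖B - A‖ * ‖B‖ :=
        mul_le_mul (hBA j) (hB k) (norm_nonneg _) (norm_nonneg _)
      have m2 : ‖A j‖ * ‖B k - A k‖ ≤ ‖A‖ * ‖B - A‖ :=
        mul_le_mul (hA j) (hBA k) (norm_nonneg _) (norm_nonneg _)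
      have m1' := mul_le_mul_of_nonneg_left m1 n1
      have m2' := mul_le_mul_of_nonneg_left m2 n1
      linarith
    have ht : ‖(↑(t j) * ↑(t k) : ℂ)‖ ≤ ‖t‖^2 := by
      rw [norm_mul, Complex.norm_real, Complex.norm_real, pow_two]
      exact mul_le_mul (norm_le_pi_norm t j) (norm_le_pi_norm t k) (norm_nonneg _) (norm_nonneg _)
    calc ‖cbil (B j - A j) (B k) + cbil (A j) (B k - A k)‖ * ‖(↑(t j) * ↑(t k) : ℂ)‖
        ≤ ((n+1) * ((‖B‖ + ‖A‖) * ‖B - A‖)) * ‖t‖^2 :=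
          mul_le_mul hd ht (norm_nonneg _) (by positivity)
      _ = (n+1) * ((‖B‖ + ‖A‖) * (‖B - A‖ * ‖t‖^2)) := by ring
  calc ‖Qf B t - Qf A t‖ = ‖∑ j, ∑ k, (cbil (B j) (B k) - cbil (A j) (A k)) * (↑(t j) * ↑(t k))‖ := by
        simp [Qf, ← Finset.sum_sub_distrib, sub_mul]
    _ ≤ ∑ j, ∑ k, ‖(cbil (B j) (B k) - cbil (A j) (A k)) * (↑(t j) * ↑(t k))‖ :=
        (norm_sum_le _ _).trans (Finset.sum_le_sum fun j _ => norm_sum_le _ _)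
    _ ≤ ∑ _j : Fin (n+1), ∑ _k : Fin (n+1), (n+1) * ((‖B‖ + ‖A‖) * (‖B - A‖ * ‖t‖^2)) :=
        Finset.sum_le_sum fun j _ => Finset.sum_le_sum fun k _ => key j k
    _ = (n+1)^3 * ((‖B‖ + ‖A‖) * (‖B - A‖ * ‖t‖^2)) := by
        simp [Finset.sum_const]; ring

theorem exists_uniform {n : ℕ} (A : Fin (n + 1) → (Fin (n + 1) → ℂ))
    (hA : ∀ t : Fin (n + 1) → ℝ, (∀ i, 0 ≤ t i) → t ≠ 0 → 0 < (Qf A t).re) :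
    ∃ c > 0, ∃ ε > 0, ∀ B : Fin (n + 1) → (Fin (n + 1) → ℂ), dist B A < ε →
      ∀ t : Fin (n + 1) → ℝ, (∀ i, 0 ≤ t i) → c * ‖t‖^2 ≤ (Qf B t).re := by
  obtain ⟨c, hc, hlow⟩ := exists_pos_lower A hA
  set M : ℝ := (n+1:ℝ)^3 * (2*‖A‖ + 1) + 1 with hM
  have hMpos : 0 < M := by positivity
  refine ⟨c/2, by positivity, min 1 (c/(2*M)), by positivity, fun B hB t ht => ?_⟩
  rw [dist_eq_norm] at hB
  have hB1 : ‖B - A‖ ≤ 1 := (lt_min_iff.mp hB).1.le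
  have hB2 : ‖B - A‖ ≤ c/(2*M) := (lt_min_iff.mp hB).2.le
  have hBn : ‖B‖ ≤ ‖A‖ + 1 := by
    have := norm_sub_norm_le B A
    linarith
  have hsub := Qf_sub_norm_le A B t
  have hq : (n+1:ℝ)^3 * (‖B‖+‖A‖) ≤ M := by
    have hp : (0:ℝ) < (n+1:ℝ)^3 := by positivity
    nlinarith [norm_nonneg A]
  have hbound : ‖Qf B t - Qf A t‖ ≤ c/2 * ‖t‖^2 := by
    have hre : (n+1:ℝ)^3 * ((‖B‖ + ‖A‖) * (‖B - A‖ * ‖t‖^2))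
        = ((n+1:ℝ)^3 * (‖B‖+‖A‖) * ‖B - A‖) * ‖t‖^2 := by ring
    rw [hre] at hsub
    refine hsub.trans (mul_le_mul_of_nonneg_right ?_ (by positivity))
    have h3 : (n+1:ℝ)^3 * (‖B‖+‖A‖) * ‖B - A‖ ≤ M * (c/(2*M)) :=
      mul_le_mul hq hB2 (norm_nonneg _) hMpos.le
    have h4 : M * (c/(2*M)) = c/2 := by field_simp
    linarith
  have hre2 : (Qf A t).re - (Qf B t).re ≤ ‖Qf B t - Qf A t‖ := by
    have h5 : (Qf A t - Qf B t).re ≤ ‖Qf A t - Qf B t‖ :=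
      (Complex.abs_re_le_norm _).trans' (le_abs_self _) |>.trans (le_of_eq rfl)
    rw [norm_sub_rev]
    simpa [Complex.sub_re] using h5
  have := hlow t ht
  linarith

theorem gauss_integrable {n : ℕ} {b : ℝ} (hb : 0 < b) :
    Integrable (fun t : Fin (n+1) → ℝ => Real.exp (-(b * ‖t‖^2))) := by
  have hprod : Integrable (fun t : Fin (n+1) → ℝ => ∏ i, Real.exp (-(b/((n:ℝ)+1)) * (t i)^2)) :=
    Integrable.fintype_prod (f := fun _ (x:ℝ) => Real.exp (-(b/((n:ℝ)+1)) * x^2))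
      (fun _ => integrable_exp_neg_mul_sq (by positivity))
  refine hprod.mono' (Continuous.aestronglyMeasurable (by fun_prop)) ?_
  filter_upwards with t
  rw [Real.norm_eq_abs, abs_of_pos (Real.exp_pos _), ← Real.exp_sum]
  apply Real.exp_le_exp.mpr
  have hsum : ∑ i, (t i)^2 ≤ ((n:ℝ)+1) * ‖t‖^2 := by
    have h1 : ∀ i ∈ Finset.univ, (t i)^2 ≤ ‖t‖^2 := fun i _ => by
      have h := abs_le.mp ((Real.norm_eq_abs (t i)) ▸ norm_le_pi_norm t i)
      exact sq_le_sq' h.1 h.2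
    calc ∑ i, (t i)^2 ≤ ∑ _i : Fin (n+1), ‖t‖^2 := Finset.sum_le_sum h1
      _ = ((n:ℝ)+1) * ‖t‖^2 := by simp [Finset.sum_const, mul_comm]
  have e2 : ∑ i, -(b/((n:ℝ)+1)) * (t i)^2 = -(b/((n:ℝ)+1)) * ∑ i, (t i)^2 := by
    rw [Finset.mul_sum]
  rw [e2]
  have hb' : (0:ℝ) < b/((n:ℝ)+1) := by positivity
  have e3 : (b/((n:ℝ)+1)) * (((n:ℝ)+1) * ‖t‖^2) = b * ‖t‖^2 := by field_simp
  nlinarith [mul_le_mul_of_nonneg_left hsum hb'.le]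

theorem integrable_sq_gauss {n : ℕ} {c : ℝ} (hc : 0 < c) :
    Integrable (fun t : Fin (n+1) → ℝ => ‖t‖^2 * Real.exp (-(c * ‖t‖^2))) := by
  refine ((gauss_integrable (n := n) (half_pos hc)).const_mul (2/c)).mono'
    (Continuous.aestronglyMeasurable (by fun_prop)) ?_
  filter_upwards with t
  rw [Real.norm_eq_abs, abs_of_nonneg (by positivity)]
  have h1 : c/2 * ‖t‖^2 ≤ Real.exp (c/2*‖t‖^2) := by
    nlinarith [Real.add_one_le_exp (c/2*‖t‖^2)]
  have h2 : ‖t‖^2 ≤ 2/c * Real.exp (c/2*‖t‖^2) := by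
    rw [div_mul_eq_mul_div, le_div_iff₀ hc]
    linarith
  calc ‖t‖^2 * Real.exp (-(c * ‖t‖^2))
      ≤ (2/c * Real.exp (c/2*‖t‖^2)) * Real.exp (-(c * ‖t‖^2)) :=
        mul_le_mul_of_nonneg_right h2 (Real.exp_pos _).le
    _ = 2/c * Real.exp (-(c/2 * ‖t‖^2)) := by
        rw [mul_assoc, ← Real.exp_add]; ring_nf

theorem orthant_closed (n : ℕ) : IsClosed {t : Fin (n+1) → ℝ | ∀ i, 0 ≤ t i} := by
  have : {t : Fin (n+1) → ℝ | ∀ i, 0 ≤ t i} = ⋂ i, {t | 0 ≤ t i} := by ext; simp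
  rw [this]
  exact isClosed_iInter fun i => isClosed_le continuous_const (continuous_apply i)

theorem integrable_exp_neg_Qf {n : ℕ} (B : Fin (n + 1) → (Fin (n + 1) → ℂ)) {c : ℝ} (hc : 0 < c)
    (h : ∀ t : Fin (n+1) → ℝ, (∀ i, 0 ≤ t i) → c * ‖t‖^2 ≤ (Qf B t).re) :
    IntegrableOn (fun t : Fin (n+1) → ℝ => Complex.exp (-Qf B t)) {t | ∀ i, 0 ≤ t i} := by
  have hS : MeasurableSet {t : Fin (n+1) → ℝ | ∀ i, 0 ≤ t i} := (orthant_closed n).measurableSet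
  refine ((gauss_integrable hc).restrict (s := {t | ∀ i, 0 ≤ t i})).mono' ?_ ?_
  · exact (Continuous.aestronglyMeasurable
      (Complex.continuous_exp.comp (Qf_cont_t B).neg))
  · rw [ae_restrict_iff' hS]
    filter_upwards with t ht
    rw [Complex.norm_exp]
    apply Real.exp_le_exp.mpr
    have := h t ht
    simp only [Complex.neg_re]
    linarith

theorem det_diff {n : ℕ} :
    Differentiable ℂ (fun A : Fin (n+1) → (Fin (n+1) → ℂ) => (Matrix.of fun i j => A j i).det) := by
  simp only [Matrix.det_apply, Units.smul_def, zsmul_eq_mul]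
  apply Differentiable.fun_sum
  intro σ _
  apply Differentiable.const_mul
  intro x
  have hg : ∀ i ∈ (Finset.univ : Finset (Fin (n+1))),
      HasFDerivAt (fun y : Fin (n+1) → Fin (n+1) → ℂ => y i (σ i))
        (((ContinuousLinearMap.proj (σ i) : (Fin (n+1) → ℂ) →L[ℂ] ℂ).comp
          (ContinuousLinearMap.proj i :
            (Fin (n+1) → Fin (n+1) → ℂ) →L[ℂ] (Fin (n+1) → ℂ)))) x :=
    fun i _ => by
      have := (((ContinuousLinearMap.proj (σ i) : (Fin (n+1) → ℂ) →L[ℂ] ℂ)).comp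
        (ContinuousLinearMap.proj i :
          (Fin (n+1) → Fin (n+1) → ℂ) →L[ℂ] (Fin (n+1) → ℂ))).hasFDerivAt (x := x)
      exact this
  exact (HasFDerivAt.finset_prod hg).differentiableAt

def eCLM {n : ℕ} (j i : Fin (n+1)) : (Fin (n+1) → Fin (n+1) → ℂ) →L[ℂ] ℂ :=
  (ContinuousLinearMap.proj i : (Fin (n+1) → ℂ) →L[ℂ] ℂ).comp
    (ContinuousLinearMap.proj j : (Fin (n+1) → Fin (n+1) → ℂ) →L[ℂ] (Fin (n+1) → ℂ))

theorem eCLM_apply {n : ℕ} (j i : Fin (n+1)) (V : Fin (n+1) → Fin (n+1) → ℂ) :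
    eCLM j i V = V j i := rfl

theorem eCLM_norm_le {n : ℕ} (j i : Fin (n+1)) : ‖(eCLM j i : _ →L[ℂ] ℂ)‖ ≤ 1 :=
  ContinuousLinearMap.opNorm_le_bound _ zero_le_one fun V => by
    rw [eCLM_apply, one_mul]
    exact (norm_le_pi_norm (V j) i).trans (norm_le_pi_norm V j)

def Dclm {n : ℕ} (B : Fin (n+1) → Fin (n+1) → ℂ) (j k : Fin (n+1)) :
    (Fin (n+1) → Fin (n+1) → ℂ) →L[ℂ] ℂ :=
  ∑ i, (B j i • eCLM k i + B k i • eCLM j i)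

theorem hasFDerivAt_cbil {n : ℕ} (j k : Fin (n+1)) (B : Fin (n+1) → Fin (n+1) → ℂ) :
    HasFDerivAt (fun B : Fin (n+1) → Fin (n+1) → ℂ => cbil (B j) (B k)) (Dclm B j k) B := by
  have h : ∀ i ∈ (Finset.univ : Finset (Fin (n+1))),
      HasFDerivAt (fun B : Fin (n+1) → Fin (n+1) → ℂ => B j i * B k i)
        (B j i • eCLM k i + B k i • eCLM j i) B := by
    intro i _
    have h1 : HasFDerivAt (fun B : Fin (n+1) → Fin (n+1) → ℂ => B j i) (eCLM j i) B := by
      have := (eCLM j i (n := n)).hasFDerivAt (x := B); exact this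
    have h2 : HasFDerivAt (fun B : Fin (n+1) → Fin (n+1) → ℂ => B k i) (eCLM k i) B := by
      have := (eCLM k i (n := n)).hasFDerivAt (x := B); exact this
    exact h1.mul h2
  exact HasFDerivAt.fun_sum h

theorem Dclm_norm_le {n : ℕ} (B : Fin (n+1) → Fin (n+1) → ℂ) (j k : Fin (n+1)) :
    ‖Dclm B j k‖ ≤ 2 * ((n:ℝ)+1) * ‖B‖ := by
  refine (norm_sum_le _ _).trans ?_
  have h : ∀ i ∈ (Finset.univ : Finset (Fin (n+1))),
      ‖B j i • eCLM k i + B k i • eCLM j i‖ ≤ 2 * ‖B‖ := by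
    intro i _
    refine (norm_add_le _ _).trans ?_
    have e1 : ‖B j i • eCLM k i‖ ≤ ‖B‖ := by
      refine (ContinuousLinearMap.opNorm_smul_le _ _).trans ?_
      calc ‖B j i‖ * ‖(eCLM k i : _ →L[ℂ] ℂ)‖ ≤ ‖B‖ * 1 :=
            mul_le_mul ((norm_le_pi_norm (B j) i).trans (norm_le_pi_norm B j))
              (eCLM_norm_le k i) (norm_nonneg _) (norm_nonneg _)
        _ = ‖B‖ := mul_one _
    have e2 : ‖B k i • eCLM j i‖ ≤ ‖B‖ := by
      refine (ContinuousLinearMap.opNorm_smul_le _ _).trans ?_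
      calc ‖B k i‖ * ‖(eCLM j i : _ →L[ℂ] ℂ)‖ ≤ ‖B‖ * 1 :=
            mul_le_mul ((norm_le_pi_norm (B k) i).trans (norm_le_pi_norm B k))
              (eCLM_norm_le j i) (norm_nonneg _) (norm_nonneg _)
        _ = ‖B‖ := mul_one _
    linarith
  refine (Finset.sum_le_sum h).trans ?_
  simp [Finset.sum_const]
  ring_nf
  nlinarith [norm_nonneg B]

def QD {n : ℕ} (B : Fin (n+1) → Fin (n+1) → ℂ) (t : Fin (n+1) → ℝ) :
    (Fin (n+1) → Fin (n+1) → ℂ) →L[ℂ] ℂ :=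
  ∑ j, ∑ k, ((t j : ℂ) * (t k : ℂ)) • Dclm B j k

theorem hasFDerivAt_Qf {n : ℕ} (B : Fin (n+1) → Fin (n+1) → ℂ) (t : Fin (n+1) → ℝ) :
    HasFDerivAt (fun B => Qf B t) (QD B t) B := by
  refine HasFDerivAt.fun_sum fun j _ => HasFDerivAt.fun_sum fun k _ => ?_
  exact (hasFDerivAt_cbil j k B).mul_const _

theorem QD_norm_le {n : ℕ} (B : Fin (n+1) → Fin (n+1) → ℂ) (t : Fin (n+1) → ℝ) :
    ‖QD B t‖ ≤ ((n:ℝ)+1)^2 * ‖t‖^2 * (2 * ((n:ℝ)+1) * ‖B‖) := by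
  refine (norm_sum_le _ _).trans ?_
  have h : ∀ j ∈ (Finset.univ : Finset (Fin (n+1))),
      ‖∑ k, ((t j : ℂ) * (t k : ℂ)) • Dclm B j k‖ ≤ ‖t‖^2 * (2 * ((n:ℝ)+1) * ‖B‖) * ((n:ℝ)+1) := by
    intro j _
    refine (norm_sum_le _ _).trans ?_
    have hk : ∀ k ∈ (Finset.univ : Finset (Fin (n+1))),
        ‖((t j : ℂ) * (t k : ℂ)) • Dclm B j k‖ ≤ ‖t‖^2 * (2 * ((n:ℝ)+1) * ‖B‖) := by
      intro k _
      refine (ContinuousLinearMap.opNorm_smul_le _ _).trans ?_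
      rw [norm_mul, Complex.norm_real, Complex.norm_real]
      have htj : ‖t j‖ ≤ ‖t‖ := norm_le_pi_norm t j
      have htk : ‖t k‖ ≤ ‖t‖ := norm_le_pi_norm t k
      have h1 : ‖t j‖ * ‖t k‖ ≤ ‖t‖^2 := by
        rw [pow_two]; exact mul_le_mul htj htk (norm_nonneg _) (norm_nonneg _)
      exact mul_le_mul h1 (Dclm_norm_le B j k) (norm_nonneg _) (by positivity)
    refine (Finset.sum_le_sum hk).trans ?_
    simp [Finset.sum_const]
    ring_nf
    nlinarith [norm_nonneg B, norm_nonneg t, sq_nonneg ‖t‖]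
  refine (Finset.sum_le_sum h).trans ?_
  simp [Finset.sum_const]
  ring_nf
  nlinarith [norm_nonneg B, norm_nonneg t, sq_nonneg ‖t‖]

def FD {n : ℕ} (B : Fin (n+1) → Fin (n+1) → ℂ) (t : Fin (n+1) → ℝ) :
    (Fin (n+1) → Fin (n+1) → ℂ) →L[ℂ] ℂ :=
  Complex.exp (-Qf B t) • (-QD B t)

theorem hasFDerivAt_exp_Qf {n : ℕ} (B : Fin (n+1) → Fin (n+1) → ℂ) (t : Fin (n+1) → ℝ) :
    HasFDerivAt (fun B => Complex.exp (-Qf B t)) (FD B t) B :=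
  ((hasFDerivAt_Qf B t).neg).cexp

theorem FD_norm_le {n : ℕ} (B : Fin (n+1) → Fin (n+1) → ℂ) (t : Fin (n+1) → ℝ) :
    ‖FD B t‖ ≤ Real.exp (-(Qf B t).re) * (((n:ℝ)+1)^2 * ‖t‖^2 * (2 * ((n:ℝ)+1) * ‖B‖)) := by
  rw [FD]
  refine (ContinuousLinearMap.opNorm_smul_le _ _).trans ?_
  rw [norm_neg, Complex.norm_exp, Complex.neg_re]
  exact mul_le_mul_of_nonneg_left (QD_norm_le B t) (Real.exp_pos _).le

theorem QD_cont_t {n : ℕ} (B : Fin (n+1) → Fin (n+1) → ℂ) :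
    Continuous fun t : Fin (n+1) → ℝ => QD B t := by
  unfold QD
  refine continuous_finset_sum _ fun j _ => continuous_finset_sum _ fun k _ => ?_
  exact Continuous.fun_smul (by fun_prop) continuous_const

theorem FD_cont_t {n : ℕ} (B : Fin (n+1) → Fin (n+1) → ℂ) :
    Continuous fun t : Fin (n+1) → ℝ => FD B t := by
  unfold FD
  exact Continuous.smul (Complex.continuous_exp.comp (Qf_cont_t B).neg) (QD_cont_t B).neg

/-- `Ψ` is a relatively open subset of `Q^{n+1}`, the integral defining `F(A)` converges
absolutely for every `A ∈ Ψ`, and `F` is holomorphic on `Ψ` (i.e. near every point of `Ψ`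
it extends to a holomorphic function on a neighborhood in the ambient space). -/
theorem Psi_open_F_integrable_F_holomorphic (n : ℕ) :
    (∃ U : Set (Fin (n + 1) → (Fin (n + 1) → ℂ)), IsOpen U ∧
      Psi n = U ∩ {A | ∀ j, cbil (A j) (A j) = 1}) ∧
    (∀ A ∈ Psi n,
      IntegrableOn
        (fun t : Fin (n + 1) → ℝ =>
          Complex.exp (-∑ j, ∑ k, cbil (A j) (A k) * (t j * t k)))
        {t : Fin (n + 1) → ℝ | ∀ i, 0 ≤ t i}) ∧
    (∀ A ∈ Psi n, ∃ W : Set (Fin (n + 1) → (Fin (n + 1) → ℂ)), IsOpen W ∧ A ∈ W ∧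
      ∃ g : (Fin (n + 1) → (Fin (n + 1) → ℂ)) → ℂ,
        DifferentiableOn ℂ g W ∧ ∀ B ∈ W ∩ Psi n, g B = Fdet B) := by
  have hSm : MeasurableSet {t : Fin (n+1) → ℝ | ∀ i, 0 ≤ t i} := (orthant_closed n).measurableSet
  refine ⟨?_, ?_, ?_⟩
  · -- relative openness
    refine ⟨{A | ∀ t : Fin (n + 1) → ℝ, (∀ i, 0 ≤ t i) → t ≠ 0 → 0 < (Qf A t).re}, ?_, ?_⟩
    · rw [Metric.isOpen_iff]
      intro A hA
      obtain ⟨c, hc, ε, hε, h⟩ := exists_uniform A hA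
      refine ⟨ε, hε, fun B hB t ht htne => ?_⟩
      have h1 : 0 < ‖t‖ := norm_pos_iff.mpr htne
      have h2 : (0:ℝ) < c * ‖t‖^2 := by positivity
      exact h2.trans_le (h B (Metric.mem_ball.mp hB) t ht)
    · ext A
      exact ⟨fun hA => ⟨hA.2, hA.1⟩, fun hA => ⟨hA.2, hA.1⟩⟩
  · -- integrability
    intro A hA
    obtain ⟨c, hc, ε, hε, h⟩ := exists_uniform A hA.2
    exact integrable_exp_neg_Qf A hc (h A (by simpa [dist_self] using hε))
  · -- holomorphy
    intro A hA
    obtain ⟨c, hc, ε, hε, h⟩ := exists_uniform A hA.2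
    refine ⟨Metric.ball A ε, Metric.isOpen_ball, Metric.mem_ball_self hε, Fdet, ?_,
      fun B _ => rfl⟩
    intro B1 hB1
    refine DifferentiableAt.differentiableWithinAt ?_
    have hdet : DifferentiableAt ℂ
        (fun B : Fin (n+1) → Fin (n+1) → ℂ => (Matrix.of fun i j => B j i).det) B1 :=
      det_diff.differentiableAt
    have hεpos : 0 < ε - dist B1 A := by
      rw [Metric.mem_ball] at hB1; linarith
    have hballsub : Metric.ball B1 (ε - dist B1 A) ⊆ Metric.ball A ε := by
      intro x hx
      rw [Metric.mem_ball] at hx ⊢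
      calc dist x A ≤ dist x B1 + dist B1 A := dist_triangle _ _ _
        _ < ε := by linarith
    set R : ℝ := ‖A‖ + ε with hR
    have hnormB : ∀ x ∈ Metric.ball A ε, ‖x‖ ≤ R := by
      intro x hx
      rw [Metric.mem_ball, dist_eq_norm] at hx
      have := norm_sub_norm_le x A
      rw [hR]; linarith
    have hint : DifferentiableAt ℂ
        (fun B : Fin (n+1) → Fin (n+1) → ℂ =>
          ∫ t in {t : Fin (n + 1) → ℝ | ∀ i, 0 ≤ t i}, Complex.exp (-Qf B t)) B1 := by
      have key := hasFDerivAt_integral_of_dominated_of_fderiv_le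
        (F := fun B (t : Fin (n+1) → ℝ) => Complex.exp (-Qf B t))
        (F' := fun B t => FD B t)
        (x₀ := B1)
        (bound := fun t => (((n:ℝ)+1)^2 * (2 * ((n:ℝ)+1) * R)) * (‖t‖^2 * Real.exp (-(c * ‖t‖^2))))
        (μ := volume.restrict {t : Fin (n + 1) → ℝ | ∀ i, 0 ≤ t i})
        (Metric.ball_mem_nhds B1 hεpos)
        (Filter.Eventually.of_forall fun x =>
          (Complex.continuous_exp.comp (Qf_cont_t x).neg).aestronglyMeasurable)
        (integrable_exp_neg_Qf B1 hc (h B1 (hballsub (Metric.mem_ball_self hεpos))))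
        ((FD_cont_t B1).aestronglyMeasurable)
        ?_ ?_ ?_
      · exact key.differentiableAt
      · -- bound
        rw [ae_restrict_iff' hSm]
        filter_upwards with t ht
        intro x hx
        have hxA : x ∈ Metric.ball A ε := hballsub hx
        have hlow := h x (Metric.mem_ball.mp hxA) t ht
        have hxR := hnormB x hxA
        have e1 : Real.exp (-(Qf x t).re) ≤ Real.exp (-(c * ‖t‖^2)) := by
          apply Real.exp_le_exp.mpr; linarith
        have e2 : ((n:ℝ)+1)^2 * ‖t‖^2 * (2 * ((n:ℝ)+1) * ‖x‖)
            ≤ ((n:ℝ)+1)^2 * ‖t‖^2 * (2 * ((n:ℝ)+1) * R) := by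
          have : (0:ℝ) ≤ ((n:ℝ)+1)^2 * ‖t‖^2 := by positivity
          refine mul_le_mul_of_nonneg_left ?_ this
          have : (0:ℝ) ≤ 2 * ((n:ℝ)+1) := by positivity
          exact mul_le_mul_of_nonneg_left hxR this
        calc ‖FD x t‖ ≤ Real.exp (-(Qf x t).re) * (((n:ℝ)+1)^2 * ‖t‖^2 * (2 * ((n:ℝ)+1) * ‖x‖)) :=
              FD_norm_le x t
          _ ≤ Real.exp (-(c * ‖t‖^2)) * (((n:ℝ)+1)^2 * ‖t‖^2 * (2 * ((n:ℝ)+1) * R)) := by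
              refine mul_le_mul e1 e2 (by positivity) (Real.exp_pos _).le
          _ = (((n:ℝ)+1)^2 * (2 * ((n:ℝ)+1) * R)) * (‖t‖^2 * Real.exp (-(c * ‖t‖^2))) := by
              ring
      · -- bound integrable
        exact ((integrable_sq_gauss hc).const_mul _).restrict
      · -- differentiability a.e.
        exact Filter.Eventually.of_forall fun t x _ => hasFDerivAt_exp_Qf x t
    exact hdet.mul hint

end
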